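/- If p and q are valuation functions (with domains of size < μ contained in λ) that coincide on dom(p) ∩ dom(q), then p and q are compatible: there is a valuation function extending both. -/

import Mathlib

open Cardinal

/-- The three values `≥`, `⊥`, "undefined" of a valuation function. -/
inductive VVal : Type
  | ge : VVal
  | perp : VVal
  | und : VVal
deriving DecidableEq

/-- A condition of the forcing `ℙ(λ,μ)`: a valuation function whose domain is a subset
`w` of (the linear order) `O` of cardinality `< μ` (only values on pairs `i < j` of
elements of `w` are relevant). -/
structure VCond (O : Type u) [LinearOrder O] (μ : Cardinal.{u}) where
  w : Set O
  small : #w < μ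
  p : O → O → VVal
  trans_ge : ∀ i j k : O, i ∈ w → j ∈ w → k ∈ w → i < j → j < k →
    p i j = VVal.ge → p j k = VVal.ge → p i k = VVal.ge
  mix1 : ∀ i j k : O, i ∈ w → j ∈ w → k ∈ w → i < j → j < k →
    p i j = VVal.perp → p i k = VVal.ge → p j k = VVal.perp
  mix2 : ∀ i j k : O, i ∈ w → j ∈ w → k ∈ w → i < j → j < k →
    p i j = VVal.ge → p i k = VVal.perp → p j k = VVal.perp
  mix3 : ∀ i j k : O, i ∈ w → j ∈ w → k ∈ w → i < j → j < k →
    p i j = VVal.perp → p j k = VVal.ge → p i k = VVal.perp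

/-- `q` extends `p` (i.e. `q ≤ p` in the forcing order, `p ⊆ q` as functions). -/
def VCond.Extends {O : Type u} [LinearOrder O] {μ : Cardinal.{u}}
    (q p : VCond O μ) : Prop :=
  p.w ⊆ q.w ∧ ∀ i ∈ p.w, ∀ j ∈ p.w, i < j → q.p i j = p.p i j

namespace VCAux

variable {O : Type u} [LinearOrder O] {μ : Cardinal.{u}}

/-- `x ≥ y` committed within condition `r`. -/
def G (r : VCond O μ) (x y : O) : Prop :=
  x ∈ r.w ∧ y ∈ r.w ∧ x < y ∧ r.p x y = VVal.ge

/-- `x ⊥ y` committed within condition `r`. -/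
def P (r : VCond O μ) (x y : O) : Prop :=
  x ∈ r.w ∧ y ∈ r.w ∧ ((x < y ∧ r.p x y = VVal.perp) ∨ (y < x ∧ r.p y x = VVal.perp))

def Agree (r s : VCond O μ) : Prop :=
  ∀ i ∈ r.w ∩ s.w, ∀ j ∈ r.w ∩ s.w, i < j → r.p i j = s.p i j

lemma Agree.symm {r s : VCond O μ} (h : Agree r s) : Agree s r :=
  fun i hi j hj hij => (h i ⟨hi.2, hi.1⟩ j ⟨hj.2, hj.1⟩ hij).symm

variable {r s : VCond O μ} {x y z : O}

lemma P_symm (h : P r x y) : P r y x := ⟨h.2.1, h.1, h.2.2.symm⟩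

lemma G_trans (h1 : G r x y) (h2 : G r y z) : G r x z := by
  obtain ⟨hx, hy, hxy, hge⟩ := h1
  obtain ⟨_, hz, hyz, hge'⟩ := h2
  exact ⟨hx, hz, hxy.trans hyz, r.trans_ge x y z hx hy hz hxy hyz hge hge'⟩

lemma P_G (h1 : P r x y) (h2 : G r y z) : P r x z := by
  obtain ⟨hx, hy, hc⟩ := h1
  obtain ⟨_, hz, hyz, hge⟩ := h2
  rcases hc with ⟨hxy, hperp⟩ | ⟨hyx, hperp⟩
  · exact ⟨hx, hz, Or.inl ⟨hxy.trans hyz, r.mix3 x y z hx hy hz hxy hyz hperp hge⟩⟩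
  · rcases lt_trichotomy x z with hxz | rfl | hzx
    · exact ⟨hx, hz, Or.inl ⟨hxz, r.mix1 y x z hy hx hz hyx hxz hperp hge⟩⟩
    · rw [hperp] at hge; exact (VVal.noConfusion hge)
    · exact ⟨hx, hz, Or.inr ⟨hzx, r.mix2 y z x hy hz hx hyz hzx hge hperp⟩⟩

lemma PG_contra (h1 : P r x y) (h2 : G r x y) : False := by
  obtain ⟨_, _, hc⟩ := h1
  obtain ⟨_, _, hxy, hge⟩ := h2
  rcases hc with ⟨_, hperp⟩ | ⟨hyx, _⟩
  · rw [hperp] at hge; exact VVal.noConfusion hge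
  · exact absurd hxy (lt_asymm hyx)

lemma transferG (hag : Agree r s) (h : G r x y) (hx : x ∈ s.w) (hy : y ∈ s.w) :
    G s x y := by
  obtain ⟨hx', hy', hxy, hge⟩ := h
  refine ⟨hx, hy, hxy, ?_⟩
  rw [← hag x ⟨hx', hx⟩ y ⟨hy', hy⟩ hxy]; exact hge

lemma transferP (hag : Agree r s) (h : P r x y) (hx : x ∈ s.w) (hy : y ∈ s.w) :
    P s x y := by
  obtain ⟨hx', hy', hc⟩ := h
  refine ⟨hx, hy, ?_⟩
  rcases hc with ⟨hxy, hperp⟩ | ⟨hyx, hperp⟩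
  · exact Or.inl ⟨hxy, by rw [← hag x ⟨hx', hx⟩ y ⟨hy', hy⟩ hxy]; exact hperp⟩
  · exact Or.inr ⟨hyx, by rw [← hag y ⟨hy', hy⟩ x ⟨hx', hx⟩ hyx]; exact hperp⟩

def Gb (r s : VCond O μ) (x y : O) : Prop := G r x y ∨ G s x y
def Pb (r s : VCond O μ) (x y : O) : Prop := P r x y ∨ P s x y

def GeC (r s : VCond O μ) (x y : O) : Prop :=
  ∃ c, (c ∈ r.w ∧ c ∈ s.w) ∧ Gb r s x c ∧ Gb r s c y

def PerpC (r s : VCond O μ) (x y : O) : Prop :=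
  ∃ c, (c ∈ r.w ∧ c ∈ s.w) ∧
    ((Pb r s x c ∧ Gb r s c y) ∨ (Gb r s c x ∧ Pb r s c y))

def GG (r s : VCond O μ) (x y : O) : Prop := Gb r s x y ∨ GeC r s x y
def PP (r s : VCond O μ) (x y : O) : Prop := Pb r s x y ∨ PerpC r s x y

lemma Gb_swap (h : Gb r s x y) : Gb s r x y := h.symm
lemma Pb_swap (h : Pb r s x y) : Pb s r x y := h.symm

lemma GeC_swap (h : GeC r s x y) : GeC s r x y := by
  obtain ⟨c, ⟨h1, h2⟩, a, b⟩ := h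
  exact ⟨c, ⟨h2, h1⟩, Gb_swap a, Gb_swap b⟩

lemma PerpC_swap (h : PerpC r s x y) : PerpC s r x y := by
  obtain ⟨c, ⟨h1, h2⟩, hd⟩ := h
  refine ⟨c, ⟨h2, h1⟩, ?_⟩
  rcases hd with ⟨a, b⟩ | ⟨a, b⟩
  · exact Or.inl ⟨Pb_swap a, Gb_swap b⟩
  · exact Or.inr ⟨Gb_swap a, Pb_swap b⟩

lemma GG_swap (h : GG r s x y) : GG s r x y := h.imp Gb_swap GeC_swap
lemma PP_swap (h : PP r s x y) : PP s r x y := h.imp Pb_swap PerpC_swap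

lemma Pb_symm (h : Pb r s x y) : Pb r s y x := h.imp P_symm P_symm

lemma PerpC_symm (h : PerpC r s x y) : PerpC r s y x := by
  obtain ⟨c, hc, hd⟩ := h
  refine ⟨c, hc, ?_⟩
  rcases hd with ⟨a, b⟩ | ⟨a, b⟩
  · exact Or.inr ⟨b, Pb_symm a⟩
  · exact Or.inl ⟨Pb_symm b, a⟩

lemma PP_symm (h : PP r s x y) : PP r s y x := h.imp Pb_symm PerpC_symm

lemma normGb (hag : Agree r s) (h : Gb r s x y) (hx : x ∈ r.w) (hy : y ∈ r.w) :
    G r x y := by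
  rcases h with h | h
  · exact h
  · exact transferG hag.symm h hx hy

lemma normPb (hag : Agree r s) (h : Pb r s x y) (hx : x ∈ r.w) (hy : y ∈ r.w) :
    P r x y := by
  rcases h with h | h
  · exact h
  · exact transferP hag.symm h hx hy

lemma normGG (hag : Agree r s) (h : GG r s x y) (hx : x ∈ r.w) (hy : y ∈ r.w) :
    G r x y := by
  rcases h with h | ⟨c, hc, h1, h2⟩
  · exact normGb hag h hx hy
  · exact G_trans (normGb hag h1 hx hc.1) (normGb hag h2 hc.1 hy)

lemma normPP (hag : Agree r s) (h : PP r s x y) (hx : x ∈ r.w) (hy : y ∈ r.w) :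
    P r x y := by
  rcases h with h | ⟨c, hc, hd⟩
  · exact normPb hag h hx hy
  rcases hd with ⟨a, b⟩ | ⟨a, b⟩
  · exact P_G (normPb hag a hx hc.1) (normGb hag b hc.1 hy)
  · exact P_symm (P_G (P_symm (normPb hag b hc.1 hy)) (normGb hag a hc.1 hx))

lemma transAux1 (hag : Agree r s) (h1 : G r x y) (h2 : GG r s y z) : GG r s x z := by
  rcases h2 with (h | h) | ⟨c, hc, hyc, hcz⟩
  · exact Or.inl (Or.inl (G_trans h1 h))
  · exact Or.inr ⟨y, ⟨h1.2.1, h.1⟩, Or.inl h1, Or.inr h⟩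
  · rcases hyc with h | h
    · exact Or.inr ⟨c, hc, Or.inl (G_trans h1 h), hcz⟩
    · exact Or.inr ⟨c, hc, Or.inl (G_trans h1 (transferG hag.symm h h1.2.1 hc.1)), hcz⟩

lemma transAux (hag : Agree r s) (h1 : Gb r s x y) (h2 : GG r s y z) : GG r s x z := by
  rcases h1 with h | h
  · exact transAux1 hag h h2
  · exact GG_swap (transAux1 hag.symm h (GG_swap h2))

lemma transGG (hag : Agree r s) (h1 : GG r s x y) (h2 : GG r s y z) : GG r s x z := by
  rcases h1 with h | ⟨c, hc, hxc, hcy⟩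
  · exact transAux hag h h2
  · exact transAux hag hxc (transAux hag hcy h2)

lemma perpAux1 (hag : Agree r s) (h1 : P r x y) (h2 : GG r s y z) : PP r s x z := by
  rcases h2 with (h | h) | ⟨c, hc, hyc, hcz⟩
  · exact Or.inl (Or.inl (P_G h1 h))
  · exact Or.inr ⟨y, ⟨h1.2.1, h.1⟩, Or.inl ⟨Or.inl h1, Or.inr h⟩⟩
  · rcases hyc with h | h
    · exact Or.inr ⟨c, hc, Or.inl ⟨Or.inl (P_G h1 h), hcz⟩⟩
    · exact Or.inr ⟨c, hc, Or.inl ⟨Or.inl (P_G h1 (transferG hag.symm h h1.2.1 hc.1)), hcz⟩⟩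

lemma perpAuxPb (hag : Agree r s) (h1 : Pb r s x y) (h2 : GG r s y z) : PP r s x z := by
  rcases h1 with h | h
  · exact perpAux1 hag h h2
  · exact PP_swap (perpAux1 hag.symm h (GG_swap h2))

lemma perpBelow (hag : Agree r s) (h1 : Gb r s c x) (h2 : PP r s c z) : PP r s x z := by
  rcases h2 with h | ⟨d, hd, hdd⟩
  · exact PP_symm (perpAuxPb hag (Pb_symm h) (Or.inl h1))
  rcases hdd with ⟨a, b⟩ | ⟨a, b⟩
  · -- Pb c d ∧ Gb d z ; x ≤ c  ⇒  x ⊥ d  ⇒  x ⊥ z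
    rcases h1 with hcx | hcx
    · have hpcd : P r c d := normPb hag a hcx.1 hd.1
      have : P r x d := P_symm (P_G (P_symm hpcd) hcx)
      exact perpAuxPb hag (Or.inl this) (Or.inl b)
    · have hpcd : P s c d := normPb hag.symm (Pb_swap a) hcx.1 hd.2
      have : P s x d := P_symm (P_G (P_symm hpcd) hcx)
      exact perpAuxPb hag (Or.inr this) (Or.inl b)
  · -- Gb d c ∧ Pb d z ; x ≤ c ≤ d ⇒ x ≤ d
    rcases h1 with hcx | hcx
    · have hdc : G r d c := normGb hag a hd.1 hcx.1
      have hdx : G r d x := G_trans hdc hcx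
      exact PP_symm (perpAuxPb hag (Pb_symm b) (Or.inl (Or.inl hdx)))
    · have hdc : G s d c := normGb hag.symm (Gb_swap a) hd.2 hcx.1
      have hdx : G s d x := G_trans hdc hcx
      exact PP_symm (perpAuxPb hag (Pb_symm b) (Or.inl (Or.inr hdx)))

lemma perpGG (hag : Agree r s) (h1 : PP r s x y) (h2 : GG r s y z) : PP r s x z := by
  rcases h1 with h | ⟨c, hc, hd⟩
  · exact perpAuxPb hag h h2
  rcases hd with ⟨a, b⟩ | ⟨a, b⟩
  · exact perpAuxPb hag a (transAux hag b h2)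
  · exact perpBelow hag a (perpAuxPb hag b h2)

lemma disjHelper (hag : Agree r s) {c0 : O} (h0 : G r x c0) (hc0 : c0 ∈ r.w ∧ c0 ∈ s.w)
    (h1 : Gb r s c0 y) (h2 : PerpC r s x y) : False := by
  rcases h1 with h1 | h1
  · -- all in r
    have hxy : G r x y := G_trans h0 h1
    exact PG_contra (normPP hag (Or.inr h2) hxy.1 hxy.2.1) hxy
  · obtain ⟨c, hc, hd⟩ := h2
    rcases hd with ⟨a, b⟩ | ⟨a, b⟩
    · have hxc : P r x c := normPb hag a h0.1 hc.1
      have hcc0 : P r c c0 := P_G (P_symm hxc) h0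
      have hcc0s : P s c c0 := transferP hag hcc0 hc.2 hc0.2
      have hcy : G s c y := normGb hag.symm (Gb_swap b) hc.2 h1.2.1
      exact PG_contra (P_G hcc0s h1) hcy
    · have hcx : G r c x := normGb hag a hc.1 h0.1
      have hcc0 : G r c c0 := G_trans hcx h0
      have hcc0s : G s c c0 := transferG hag hcc0 hc.2 hc0.2
      have hcy : P s c y := normPb hag.symm (Pb_swap b) hc.2 h1.2.1
      exact PG_contra (P_symm (P_G (P_symm hcy) hcc0s)) h1

lemma disjGGPP (hag : Agree r s) (h1 : GG r s x y) (h2 : PP r s x y) : False := by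
  rcases h1 with h1 | ⟨c0, hc0, hxc0, hc0y⟩
  · rcases h1 with h | h
    · exact PG_contra (normPP hag h2 h.1 h.2.1) h
    · exact PG_contra (normPP hag.symm (PP_swap h2) h.1 h.2.1) h
  · rcases h2 with h2 | h2
    · rcases h2 with h | h
      · exact PG_contra h (normGG hag (Or.inr ⟨c0, hc0, hxc0, hc0y⟩) h.1 h.2.1)
      · exact PG_contra h (normGG hag.symm (GG_swap (Or.inr ⟨c0, hc0, hxc0, hc0y⟩)) h.1 h.2.1)
    · rcases hxc0 with h | h
      · exact disjHelper hag h hc0 hc0y h2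
      · exact disjHelper hag.symm h ⟨hc0.2, hc0.1⟩ (Gb_swap hc0y) (PerpC_swap h2)

open Classical in
noncomputable def amalg (r s : VCond O μ) (x y : O) : VVal :=
  if x ∈ r.w ∧ y ∈ r.w then r.p x y
  else if x ∈ s.w ∧ y ∈ s.w then s.p x y
  else if GeC r s x y then VVal.ge
  else if PerpC r s x y then VVal.perp
  else VVal.und

lemma amalg_ge (hxy : x < y) (h : amalg r s x y = VVal.ge) : GG r s x y := by
  unfold amalg at h
  split_ifs at h with h1 h2 h3 h4
  · exact Or.inl (Or.inl ⟨h1.1, h1.2, hxy, h⟩)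
  · exact Or.inl (Or.inr ⟨h2.1, h2.2, hxy, h⟩)
  · exact Or.inr h3

lemma amalg_perp (hxy : x < y) (h : amalg r s x y = VVal.perp) : PP r s x y := by
  unfold amalg at h
  split_ifs at h with h1 h2 h3 h4
  · exact Or.inl (Or.inl ⟨h1.1, h1.2, Or.inl ⟨hxy, h⟩⟩)
  · exact Or.inl (Or.inr ⟨h2.1, h2.2, Or.inl ⟨hxy, h⟩⟩)
  · exact Or.inr h4

lemma amalg_of_GG (hag : Agree r s) (h : GG r s x y) : amalg r s x y = VVal.ge := by
  unfold amalg
  split_ifs with h1 h2 h3 h4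
  · exact (normGG hag h h1.1 h1.2).2.2.2
  · exact (normGG hag.symm (GG_swap h) h2.1 h2.2).2.2.2
  · rfl
  all_goals {
    exfalso
    rcases h with (h | h) | h
    · exact h1 ⟨h.1, h.2.1⟩
    · exact h2 ⟨h.1, h.2.1⟩
    · exact h3 h }

lemma amalg_of_PP (hag : Agree r s) (hxy : x < y) (h : PP r s x y) :
    amalg r s x y = VVal.perp := by
  unfold amalg
  split_ifs with h1 h2 h3 h4
  · rcases (normPP hag h h1.1 h1.2).2.2 with ⟨_, hv⟩ | ⟨hlt, _⟩
    · exact hv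
    · exact absurd hxy (lt_asymm hlt)
  · rcases (normPP hag.symm (PP_swap h) h2.1 h2.2).2.2 with ⟨_, hv⟩ | ⟨hlt, _⟩
    · exact hv
    · exact absurd hxy (lt_asymm hlt)
  · exact absurd (disjGGPP hag (Or.inr h3) h) not_false
  · rfl
  · exfalso
    rcases h with (h | h) | h
    · exact h1 ⟨h.1, h.2.1⟩
    · exact h2 ⟨h.1, h.2.1⟩
    · exact h4 h

lemma amalg_left (h1 : x ∈ r.w) (h2 : y ∈ r.w) : amalg r s x y = r.p x y := by
  unfold amalg
  rw [if_pos ⟨h1, h2⟩]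

lemma amalg_right (hag : Agree r s) (h1 : x ∈ s.w) (h2 : y ∈ s.w) (hxy : x < y) :
    amalg r s x y = s.p x y := by
  unfold amalg
  by_cases hb : x ∈ r.w ∧ y ∈ r.w
  · rw [if_pos hb]; exact hag x ⟨hb.1, h1⟩ y ⟨hb.2, h2⟩ hxy
  · rw [if_neg hb, if_pos ⟨h1, h2⟩]

end VCAux

/-- Proposition 4.4: two conditions of `ℙ(λ,μ)` coinciding on the intersection of their
domains are compatible. -/
theorem VCond_compatible_of_agree (μ lam : Cardinal.{u}) (hμ : μ ^< μ = μ)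
    (hinf : ℵ₀ ≤ μ) (hlt : μ < lam) (hreg : lam.IsRegular)
    (p q : VCond lam.ord.ToType μ)
    (hagree : ∀ i ∈ p.w ∩ q.w, ∀ j ∈ p.w ∩ q.w, i < j → p.p i j = q.p i j) :
    ∃ t : VCond lam.ord.ToType μ, t.Extends p ∧ t.Extends q := by
  have hag : VCAux.Agree p q := hagree
  refine ⟨⟨p.w ∪ q.w, ?_, VCAux.amalg p q, ?_, ?_, ?_, ?_⟩,
    ⟨Set.subset_union_left, fun i hi j hj hij => VCAux.amalg_left hi hj⟩,
    ⟨Set.subset_union_right, fun i hi j hj hij => VCAux.amalg_right hag hi hj hij⟩⟩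
  · exact (Cardinal.mk_union_le _ _).trans_lt (Cardinal.add_lt_of_lt hinf p.small q.small)
  · intro i j k _ _ _ hij hjk h1 h2
    exact VCAux.amalg_of_GG hag
      (VCAux.transGG hag (VCAux.amalg_ge hij h1) (VCAux.amalg_ge hjk h2))
  · intro i j k _ _ _ hij hjk h1 h2
    exact VCAux.amalg_of_PP hag hjk
      (VCAux.perpGG hag (VCAux.PP_symm (VCAux.amalg_perp hij h1))
        (VCAux.amalg_ge (hij.trans hjk) h2))
  · intro i j k _ _ _ hij hjk h1 h2
    exact VCAux.amalg_of_PP hag hjk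
      (VCAux.PP_symm (VCAux.perpGG hag
        (VCAux.PP_symm (VCAux.amalg_perp (hij.trans hjk) h2))
        (VCAux.amalg_ge hij h1)))
  · intro i j k _ _ _ hij hjk h1 h2
    exact VCAux.amalg_of_PP hag (hij.trans hjk)
      (VCAux.perpGG hag (VCAux.amalg_perp hij h1) (VCAux.amalg_ge hjk h2))
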